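/- For the real polynomial f: ℝ² → ℝ, f(x,y) = x(x²+1)², the set of asymptotic critical values K_∞(f) is empty. -/

import Mathlib

open Filter

lemma hasFDerivAt_aux (p : ℝ × ℝ) :
    HasFDerivAt (fun p : ℝ × ℝ => p.1 * (p.1 ^ 2 + 1) ^ 2)
      (((p.1 ^ 2 + 1) ^ 2 + p.1 * (2 * (p.1 ^ 2 + 1) * (2 * p.1))) •
        ContinuousLinearMap.fst ℝ ℝ ℝ) p := by
  have h1 : HasDerivAt (fun x : ℝ => x * (x ^ 2 + 1) ^ 2)
      ((p.1 ^ 2 + 1) ^ 2 + p.1 * (2 * (p.1 ^ 2 + 1) * (2 * p.1))) p.1 := by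
    have hx : HasDerivAt (fun x : ℝ => x) 1 p.1 := hasDerivAt_id p.1
    have hsq : HasDerivAt (fun x : ℝ => x ^ 2 + 1) (2 * p.1) p.1 := by
      simpa using ((hasDerivAt_pow 2 p.1).add_const 1)
    have hsq2 : HasDerivAt (fun x : ℝ => (x ^ 2 + 1) ^ 2)
        (2 * (p.1 ^ 2 + 1) * (2 * p.1)) p.1 := by
      have := (hasDerivAt_pow 2 (p.1 ^ 2 + 1)).comp p.1 hsq
      simpa [pow_one, Function.comp_def] using this
    simpa [Pi.mul_def] using (hx.mul hsq2)
  have h2 : HasFDerivAt (fun p : ℝ × ℝ => p.1)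
      (ContinuousLinearMap.fst ℝ ℝ ℝ) p := hasFDerivAt_fst
  exact h1.comp_hasFDerivAt p h2

lemma norm_fderiv_ge_one (p : ℝ × ℝ) :
    1 ≤ ‖fderiv ℝ (fun p : ℝ × ℝ => p.1 * (p.1 ^ 2 + 1) ^ 2) p‖ := by
  have hF := hasFDerivAt_aux p
  rw [hF.fderiv]
  set c : ℝ := (p.1 ^ 2 + 1) ^ 2 + p.1 * (2 * (p.1 ^ 2 + 1) * (2 * p.1)) with hc
  have hc1 : 1 ≤ c := by nlinarith [sq_nonneg p.1, sq_nonneg (p.1 ^ 2)]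
  have hv : ‖((1 : ℝ), (0 : ℝ))‖ = 1 := by
    simp [Prod.norm_def]
  have := (c • ContinuousLinearMap.fst ℝ ℝ ℝ).le_opNorm ((1 : ℝ), (0 : ℝ))
  simp only [ContinuousLinearMap.smul_apply, ContinuousLinearMap.coe_fst', hv,
    mul_one, smul_eq_mul] at this
  calc 1 ≤ c := hc1
    _ ≤ |c| := le_abs_self c
    _ = ‖c‖ := (Real.norm_eq_abs c).symm
    _ ≤ _ := this

/-- For the real polynomial `f(x,y) = x(x²+1)²`, the set of asymptotic critical values
`K_∞(f) = {y : ∃ x_ν, ‖x_ν‖ → ∞, f(x_ν) → y, ‖x_ν‖·‖df(x_ν)‖ → 0}` is empty. -/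
theorem Kinfty_real_example_empty :
    ∀ y : ℝ, ¬ ∃ u : ℕ → ℝ × ℝ,
      Tendsto (fun ν => ‖u ν‖) atTop atTop ∧
      Tendsto (fun ν => (u ν).1 * ((u ν).1 ^ 2 + 1) ^ 2) atTop (nhds y) ∧
      Tendsto (fun ν => ‖u ν‖ *
        ‖fderiv ℝ (fun p : ℝ × ℝ => p.1 * (p.1 ^ 2 + 1) ^ 2) (u ν)‖) atTop (nhds 0) := by
  rintro y ⟨u, hnorm, -, hsmall⟩
  have hge : ∀ ν, ‖u ν‖ ≤ ‖u ν‖ *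
      ‖fderiv ℝ (fun p : ℝ × ℝ => p.1 * (p.1 ^ 2 + 1) ^ 2) (u ν)‖ := fun ν =>
    le_mul_of_one_le_right (norm_nonneg _) (norm_fderiv_ge_one (u ν))
  have htop : Tendsto (fun ν => ‖u ν‖ *
      ‖fderiv ℝ (fun p : ℝ × ℝ => p.1 * (p.1 ^ 2 + 1) ^ 2) (u ν)‖) atTop atTop :=
    tendsto_atTop_mono hge hnorm
  exact not_tendsto_nhds_of_tendsto_atTop htop 0 hsmall
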